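/- Let j, p, q be positive natural numbers and let f, f' ∈ L²(ℝ^j × ℝ^p) and g, g' ∈ L²(ℝ^j × ℝ^q) with respect to Lebesgue measure. Define F(z, z') = ∫_{ℝ^p} f(z, x) f'(z', x) dx and G(z, z') = ∫_{ℝ^q} g(z, y) g'(z', y) dy for (z, z') ∈ ℝ^j × ℝ^j (defined almost everywhere). Then the function (x, y) ↦ (f ⊗_j g)(x, y) · (f' ⊗_j g')(x, y) is integrable on ℝ^p × ℝ^q and |∫_{ℝ^p × ℝ^q} (f ⊗_j g)(x, y)(f' ⊗_j g')(x, y) dx dy| ≤ ‖F‖_{L²(ℝ^j × ℝ^j)} · ‖G‖_{L²(ℝ^j × ℝ^j)}. -/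

import Mathlib

open MeasureTheory
open scoped ENNReal NNReal
set_option linter.unusedSectionVars false

section helpers
variable {α β : Type*} [MeasurableSpace α] [MeasurableSpace β]
  {μ : Measure α} {ν : Measure β}

lemma holder_two' {u v : α → ℝ≥0∞} (hu : AEMeasurable u μ) (hv : AEMeasurable v μ) :
    ∫⁻ z, u z * v z ∂μ ≤
      (∫⁻ z, u z ^ (2:ℝ) ∂μ) ^ (1/2:ℝ) * (∫⁻ z, v z ^ (2:ℝ) ∂μ) ^ (1/2:ℝ) := by
  have := ENNReal.lintegral_mul_le_Lp_mul_Lq μ (p := 2) (q := 2) ⟨by norm_num, by norm_num, by norm_num⟩ hu hv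
  simpa using this

lemma holder_two {k k' : β → ℝ} (hk : AEStronglyMeasurable k ν) (hk' : AEStronglyMeasurable k' ν) :
    ∫⁻ x, (‖k x‖₊ : ℝ≥0∞) * ‖k' x‖₊ ∂ν ≤
      (∫⁻ x, ((‖k x‖₊:ℝ≥0∞)) ^ (2:ℝ) ∂ν) ^ (1/2:ℝ) *
        (∫⁻ x, ((‖k' x‖₊:ℝ≥0∞)) ^ (2:ℝ) ∂ν) ^ (1/2:ℝ) :=
  holder_two' hk.enorm hk'.enorm

noncomputable def eN (k : α × β → ℝ) (ν : Measure β) : α → ℝ≥0∞ :=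
  fun z => (∫⁻ x, ((‖k (z, x)‖₊ : ℝ≥0∞)) ^ (2:ℝ) ∂ν) ^ (1/2 : ℝ)

lemma aemeasurable_lintegral_slice [SFinite ν] {m : α × β → ℝ≥0∞}
    (hm : AEMeasurable m (μ.prod ν)) :
    AEMeasurable (fun z => ∫⁻ x, m (z, x) ∂ν) μ := by
  refine ⟨fun z => ∫⁻ x, hm.mk m (z, x) ∂ν, hm.measurable_mk.lintegral_prod_right', ?_⟩
  filter_upwards [Measure.ae_ae_of_ae_prod hm.ae_eq_mk] with z hz
  exact lintegral_congr_ae hz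

lemma eN_aemeasurable [SFinite ν] {k : α × β → ℝ} (hk : AEStronglyMeasurable k (μ.prod ν)) :
    AEMeasurable (eN k ν) μ :=
  (aemeasurable_lintegral_slice (hk.enorm.pow_const _)).pow_const _

lemma eN_sq {k : α × β → ℝ} (z : α) :
    eN k ν z ^ (2:ℝ) = ∫⁻ x, ((‖k (z, x)‖₊ : ℝ≥0∞)) ^ (2:ℝ) ∂ν := by
  rw [eN, ← ENNReal.rpow_mul]
  norm_num

lemma lintegral_eN_sq [SFinite ν] {k : α × β → ℝ} (hk : MemLp k 2 (μ.prod ν)) :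
    ∫⁻ z, eN k ν z ^ (2:ℝ) ∂μ < ∞ := by
  simp_rw [eN_sq]
  rw [← MeasureTheory.lintegral_prod (fun w => (‖k w‖₊ : ℝ≥0∞) ^ (2:ℝ))
    (hk.aestronglyMeasurable.enorm.pow_const _)]
  have h := hk.2
  rw [eLpNorm_eq_lintegral_rpow_enorm_toReal (by norm_num) (by norm_num)] at h
  have h2 : (∫⁻ w, (‖k w‖₊ : ℝ≥0∞) ^ (2:ℝ≥0∞).toReal ∂μ.prod ν) ≠ ∞ := by
    intro hc
    rw [show (∫⁻ x, ‖k x‖ₑ ^ ENNReal.toReal 2 ∂μ.prod ν) = ∞ from hc] at h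
    simp [ENNReal.rpow_eq_top_iff] at h
  simpa using h2.lt_top

end helpers

lemma qmp_prodMap {α β γ δ : Type*} [MeasurableSpace α] [MeasurableSpace β]
    [MeasurableSpace γ] [MeasurableSpace δ] {μa : Measure α} {μb : Measure β} {μc : Measure γ}
    {μd : Measure δ} [SFinite μa] [SFinite μc] [SFinite μd]
    {φ : α → β} {ψ : γ → δ} (hφ : Measure.QuasiMeasurePreserving φ μa μb)
    (hψ : Measure.QuasiMeasurePreserving ψ μc μd) :
    Measure.QuasiMeasurePreserving (Prod.map φ ψ) (μa.prod μc) (μb.prod μd) := by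
  refine ⟨hφ.measurable.prodMap hψ.measurable, ?_⟩
  rw [← Measure.map_prod_map _ _ hφ.measurable hψ.measurable]
  exact hφ.absolutelyContinuous.prod hψ.absolutelyContinuous

section kernel
variable {Z X : Type*} [MeasurableSpace Z] [MeasurableSpace X]
  {μ : Measure Z} {ν : Measure X} [SigmaFinite μ] [SigmaFinite ν]

lemma asm_fst_slice {f : Z × X → ℝ} (hf : AEStronglyMeasurable f (μ.prod ν)) :
    AEStronglyMeasurable (fun u : (Z × Z) × X => f (u.1.1, u.2)) ((μ.prod μ).prod ν) :=
  hf.comp_quasiMeasurePreserving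
    (qmp_prodMap Measure.quasiMeasurePreserving_fst (Measure.QuasiMeasurePreserving.id _))

lemma asm_snd_slice {f : Z × X → ℝ} (hf : AEStronglyMeasurable f (μ.prod ν)) :
    AEStronglyMeasurable (fun u : (Z × Z) × X => f (u.1.2, u.2)) ((μ.prod μ).prod ν) :=
  hf.comp_quasiMeasurePreserving
    (qmp_prodMap Measure.quasiMeasurePreserving_snd (Measure.QuasiMeasurePreserving.id _))

lemma memL2_kernel {f f' : Z × X → ℝ} (hf : MemLp f 2 (μ.prod ν)) (hf' : MemLp f' 2 (μ.prod ν)) :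
    MemLp (fun zz : Z × Z => ∫ x, f (zz.1, x) * f' (zz.2, x) ∂ν) 2 (μ.prod μ) := by
  have m1 := asm_fst_slice hf.1
  have m2 := asm_snd_slice hf'.1
  have mFF : AEStronglyMeasurable (fun u : (Z × Z) × X => f (u.1.1, u.2) * f' (u.1.2, u.2))
      ((μ.prod μ).prod ν) := m1.mul m2
  refine ⟨mFF.integral_prod_right', ?_⟩
  rw [eLpNorm_eq_lintegral_rpow_enorm_toReal (by norm_num) (by norm_num)]
  have key : ∫⁻ zz, (‖∫ x, f (zz.1, x) * f' (zz.2, x) ∂ν‖₊ : ℝ≥0∞) ^ (2:ℝ) ∂(μ.prod μ)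
      ≤ ∫⁻ zz, (eN f ν zz.1) ^ (2:ℝ) * (eN f' ν zz.2) ^ (2:ℝ) ∂(μ.prod μ) := by
    refine lintegral_mono_ae ?_
    filter_upwards [m1.prodMk_left, m2.prodMk_left] with zz h1 h2
    have step1 : (‖∫ x, f (zz.1, x) * f' (zz.2, x) ∂ν‖₊ : ℝ≥0∞) ≤ eN f ν zz.1 * eN f' ν zz.2 := by
      calc (‖∫ x, f (zz.1, x) * f' (zz.2, x) ∂ν‖₊ : ℝ≥0∞)
          ≤ ∫⁻ x, ‖f (zz.1, x) * f' (zz.2, x)‖₊ ∂ν := enorm_integral_le_lintegral_enorm _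
        _ = ∫⁻ x, (‖f (zz.1, x)‖₊ : ℝ≥0∞) * ‖f' (zz.2, x)‖₊ ∂ν := by
            simp [nnnorm_mul, ENNReal.coe_mul]
        _ ≤ _ := holder_two h1 h2
    calc (‖∫ x, f (zz.1, x) * f' (zz.2, x) ∂ν‖₊ : ℝ≥0∞) ^ (2:ℝ)
        ≤ (eN f ν zz.1 * eN f' ν zz.2) ^ (2:ℝ) := ENNReal.rpow_le_rpow step1 (by norm_num)
      _ = (eN f ν zz.1) ^ (2:ℝ) * (eN f' ν zz.2) ^ (2:ℝ) :=
          ENNReal.mul_rpow_of_nonneg _ _ (by norm_num)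
  have rhs : ∫⁻ zz, (eN f ν zz.1) ^ (2:ℝ) * (eN f' ν zz.2) ^ (2:ℝ) ∂(μ.prod μ)
      = (∫⁻ z, eN f ν z ^ (2:ℝ) ∂μ) * ∫⁻ z, eN f' ν z ^ (2:ℝ) ∂μ :=
    lintegral_prod_mul ((eN_aemeasurable hf.1).pow_const _) ((eN_aemeasurable hf'.1).pow_const _)
  have fin : ∫⁻ zz, (‖∫ x, f (zz.1, x) * f' (zz.2, x) ∂ν‖₊ : ℝ≥0∞) ^ (2:ℝ) ∂(μ.prod μ) < ∞ := by
    refine key.trans_lt ?_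
    rw [rhs]
    exact ENNReal.mul_lt_top (lintegral_eN_sq hf) (lintegral_eN_sq hf')
  have : ((2:ℝ≥0∞)).toReal = (2:ℝ) := by norm_num
  rw [this]
  exact ENNReal.rpow_lt_top_of_nonneg (by norm_num) fin.ne

end kernel

section CS
variable {A : Type*} [MeasurableSpace A] {μ : Measure A}

lemma abs_integral_mul_le_sqrt_mul_sqrt {F G : A → ℝ} (hF : MemLp F 2 μ) (hG : MemLp G 2 μ) :
    |∫ z, F z * G z ∂μ| ≤ Real.sqrt (∫ z, F z ^ 2 ∂μ) * Real.sqrt (∫ z, G z ^ 2 ∂μ) := by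
  have h2 : ENNReal.ofReal (2:ℝ) = 2 := by norm_num
  have key := integral_mul_norm_le_Lp_mul_Lq (μ := μ) (f := F) (g := G) (p := 2) (q := 2)
    ⟨by norm_num, by norm_num, by norm_num⟩ (by rw [h2]; exact hF) (by rw [h2]; exact hG)
  have habs : |∫ z, F z * G z ∂μ| ≤ ∫ z, ‖F z‖ * ‖G z‖ ∂μ := by
    calc |∫ z, F z * G z ∂μ| ≤ ∫ z, ‖F z * G z‖ ∂μ := by
          simpa using norm_integral_le_integral_norm (fun z => F z * G z)
      _ = ∫ z, ‖F z‖ * ‖G z‖ ∂μ := by simp_rw [norm_mul]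
  refine habs.trans (key.trans_eq ?_)
  have eF : ∫ a, ‖F a‖ ^ (2:ℝ) ∂μ = ∫ a, F a ^ 2 ∂μ := by
    refine integral_congr_ae (Filter.Eventually.of_forall fun a => ?_)
    simp [Real.rpow_two, sq_abs]
  have eG : ∫ a, ‖G a‖ ^ (2:ℝ) ∂μ = ∫ a, G a ^ 2 ∂μ := by
    refine integral_congr_ae (Filter.Eventually.of_forall fun a => ?_)
    simp [Real.rpow_two, sq_abs]
  rw [eF, eG, Real.sqrt_eq_rpow, Real.sqrt_eq_rpow]
end CS

section main
variable {Z X Y : Type*} [MeasurableSpace Z] [MeasurableSpace X] [MeasurableSpace Y]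
  {μ : Measure Z} {ν : Measure X} {ξ : Measure Y}
  [SigmaFinite μ] [SigmaFinite ν] [SigmaFinite ξ]

def bigH (f f' : Z × X → ℝ) (g g' : Z × Y → ℝ) : (Z × Z) × (X × Y) → ℝ :=
  fun w => (f (w.1.1, w.2.1) * f' (w.1.2, w.2.1)) * (g (w.1.1, w.2.2) * g' (w.1.2, w.2.2))

lemma bigH_integrable {f f' : Z × X → ℝ} {g g' : Z × Y → ℝ}
    (hf : MemLp f 2 (μ.prod ν)) (hf' : MemLp f' 2 (μ.prod ν))
    (hg : MemLp g 2 (μ.prod ξ)) (hg' : MemLp g' 2 (μ.prod ξ)) :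
    Integrable (bigH f f' g g') ((μ.prod μ).prod (ν.prod ξ)) := by
  have c1 : AEStronglyMeasurable (fun w : (Z × Z) × (X × Y) => f (w.1.1, w.2.1))
      ((μ.prod μ).prod (ν.prod ξ)) :=
    hf.1.comp_quasiMeasurePreserving
      (qmp_prodMap Measure.quasiMeasurePreserving_fst Measure.quasiMeasurePreserving_fst)
  have c2 : AEStronglyMeasurable (fun w : (Z × Z) × (X × Y) => f' (w.1.2, w.2.1))
      ((μ.prod μ).prod (ν.prod ξ)) :=
    hf'.1.comp_quasiMeasurePreserving
      (qmp_prodMap Measure.quasiMeasurePreserving_snd Measure.quasiMeasurePreserving_fst)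
  have c3 : AEStronglyMeasurable (fun w : (Z × Z) × (X × Y) => g (w.1.1, w.2.2))
      ((μ.prod μ).prod (ν.prod ξ)) :=
    hg.1.comp_quasiMeasurePreserving
      (qmp_prodMap Measure.quasiMeasurePreserving_fst Measure.quasiMeasurePreserving_snd)
  have c4 : AEStronglyMeasurable (fun w : (Z × Z) × (X × Y) => g' (w.1.2, w.2.2))
      ((μ.prod μ).prod (ν.prod ξ)) :=
    hg'.1.comp_quasiMeasurePreserving
      (qmp_prodMap Measure.quasiMeasurePreserving_snd Measure.quasiMeasurePreserving_snd)
  have hHm : AEStronglyMeasurable (bigH f f' g g') ((μ.prod μ).prod (ν.prod ξ)) :=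
    (c1.mul c2).mul (c3.mul c4)
  refine ⟨hHm, ?_⟩
  show (∫⁻ w, (‖bigH f f' g g' w‖₊ : ℝ≥0∞) ∂(μ.prod μ).prod (ν.prod ξ)) < ∞
  rw [MeasureTheory.lintegral_prod (fun w => (‖bigH f f' g g' w‖₊ : ℝ≥0∞)) hHm.enorm]
  have bound : ∫⁻ zz, ∫⁻ xy, (‖bigH f f' g g' (zz, xy)‖₊ : ℝ≥0∞) ∂(ν.prod ξ) ∂(μ.prod μ)
      ≤ ∫⁻ zz, (eN f ν zz.1 * eN f' ν zz.2) * (eN g ξ zz.1 * eN g' ξ zz.2) ∂(μ.prod μ) := by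
    refine lintegral_mono_ae ?_
    filter_upwards [(asm_fst_slice hf.1).prodMk_left, (asm_snd_slice hf'.1).prodMk_left,
      (asm_fst_slice hg.1).prodMk_left, (asm_snd_slice hg'.1).prodMk_left]
      with zz h1 h2 h3 h4
    calc ∫⁻ xy, (‖bigH f f' g g' (zz, xy)‖₊ : ℝ≥0∞) ∂(ν.prod ξ)
        = ∫⁻ xy : X × Y, ((‖f (zz.1, xy.1)‖₊ : ℝ≥0∞) * ‖f' (zz.2, xy.1)‖₊) *
            ((‖g (zz.1, xy.2)‖₊ : ℝ≥0∞) * ‖g' (zz.2, xy.2)‖₊) ∂(ν.prod ξ) := by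
          refine lintegral_congr fun xy => ?_
          simp [bigH, nnnorm_mul, ENNReal.coe_mul]
      _ = (∫⁻ x, (‖f (zz.1, x)‖₊ : ℝ≥0∞) * ‖f' (zz.2, x)‖₊ ∂ν) *
            ∫⁻ y, (‖g (zz.1, y)‖₊ : ℝ≥0∞) * ‖g' (zz.2, y)‖₊ ∂ξ :=
          lintegral_prod_mul (h1.enorm.mul h2.enorm) (h3.enorm.mul h4.enorm)
      _ ≤ (eN f ν zz.1 * eN f' ν zz.2) * (eN g ξ zz.1 * eN g' ξ zz.2) :=
          mul_le_mul' (holder_two h1 h2) (holder_two h3 h4)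
  refine bound.trans_lt ?_
  have e1 : ∫⁻ zz, (eN f ν zz.1 * eN f' ν zz.2) * (eN g ξ zz.1 * eN g' ξ zz.2) ∂(μ.prod μ)
      = ∫⁻ zz : Z × Z, (eN f ν zz.1 * eN g ξ zz.1) * (eN f' ν zz.2 * eN g' ξ zz.2) ∂(μ.prod μ) :=
    lintegral_congr fun zz => by ring
  rw [e1, lintegral_prod_mul (f := fun z => eN f ν z * eN g ξ z)
    (g := fun z => eN f' ν z * eN g' ξ z) ((eN_aemeasurable hf.1).mul (eN_aemeasurable hg.1))
    ((eN_aemeasurable hf'.1).mul (eN_aemeasurable hg'.1))]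
  have b1 := (holder_two' (eN_aemeasurable hf.1) (eN_aemeasurable hg.1)).trans_lt
    (ENNReal.mul_lt_top (ENNReal.rpow_lt_top_of_nonneg (by norm_num) (lintegral_eN_sq hf).ne)
      (ENNReal.rpow_lt_top_of_nonneg (by norm_num) (lintegral_eN_sq hg).ne))
  have b2 := (holder_two' (eN_aemeasurable hf'.1) (eN_aemeasurable hg'.1)).trans_lt
    (ENNReal.mul_lt_top (ENNReal.rpow_lt_top_of_nonneg (by norm_num) (lintegral_eN_sq hf').ne)
      (ENNReal.rpow_lt_top_of_nonneg (by norm_num) (lintegral_eN_sq hg').ne))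
  exact ENNReal.mul_lt_top b1 b2

theorem gen (f f' : Z × X → ℝ) (g g' : Z × Y → ℝ)
    (hf : MemLp f 2 (μ.prod ν)) (hf' : MemLp f' 2 (μ.prod ν))
    (hg : MemLp g 2 (μ.prod ξ)) (hg' : MemLp g' 2 (μ.prod ξ)) :
    Integrable (fun xy : X × Y =>
      (∫ z, f (z, xy.1) * g (z, xy.2) ∂μ) * (∫ z, f' (z, xy.1) * g' (z, xy.2) ∂μ)) (ν.prod ξ) ∧
    |∫ xy : X × Y, (∫ z, f (z, xy.1) * g (z, xy.2) ∂μ) *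
        (∫ z, f' (z, xy.1) * g' (z, xy.2) ∂μ) ∂(ν.prod ξ)| ≤
      Real.sqrt (∫ zz : Z × Z, (∫ x, f (zz.1, x) * f' (zz.2, x) ∂ν) ^ 2 ∂(μ.prod μ)) *
      Real.sqrt (∫ zz : Z × Z, (∫ y, g (zz.1, y) * g' (zz.2, y) ∂ξ) ^ 2 ∂(μ.prod μ)) := by
  have hHi := bigH_integrable hf hf' hg hg'
  have hT : ∀ xy : X × Y,
      (∫ z, f (z, xy.1) * g (z, xy.2) ∂μ) * (∫ z, f' (z, xy.1) * g' (z, xy.2) ∂μ)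
        = ∫ zz, bigH f f' g g' (zz, xy) ∂(μ.prod μ) := by
    intro xy
    rw [← integral_prod_mul (fun z => f (z, xy.1) * g (z, xy.2))
      (fun z => f' (z, xy.1) * g' (z, xy.2))]
    refine integral_congr_ae (Filter.Eventually.of_forall fun zz => ?_)
    simp only [bigH]
    ring
  have hTi : Integrable (fun xy : X × Y =>
      ∫ zz, bigH f f' g g' (zz, xy) ∂(μ.prod μ)) (ν.prod ξ) := hHi.swap.integral_prod_left
  constructor
  · exact hTi.congr (Filter.Eventually.of_forall fun xy => (hT xy).symm)
  have hval : ∫ xy : X × Y, (∫ z, f (z, xy.1) * g (z, xy.2) ∂μ) *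
      (∫ z, f' (z, xy.1) * g' (z, xy.2) ∂μ) ∂(ν.prod ξ)
      = ∫ zz : Z × Z, (∫ x, f (zz.1, x) * f' (zz.2, x) ∂ν) *
          (∫ y, g (zz.1, y) * g' (zz.2, y) ∂ξ) ∂(μ.prod μ) := by
    have step1 : ∫ xy : X × Y, (∫ z, f (z, xy.1) * g (z, xy.2) ∂μ) *
        (∫ z, f' (z, xy.1) * g' (z, xy.2) ∂μ) ∂(ν.prod ξ)
        = ∫ xy : X × Y, ∫ zz, bigH f f' g g' (zz, xy) ∂(μ.prod μ) ∂(ν.prod ξ) :=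
      integral_congr_ae (Filter.Eventually.of_forall fun xy => hT xy)
    have step2 : ∫ xy : X × Y, ∫ zz, bigH f f' g g' (zz, xy) ∂(μ.prod μ) ∂(ν.prod ξ)
        = ∫ zz : Z × Z, ∫ xy, bigH f f' g g' (zz, xy) ∂(ν.prod ξ) ∂(μ.prod μ) :=
      integral_integral_swap hHi.swap
    have step3 : ∀ zz : Z × Z, ∫ xy, bigH f f' g g' (zz, xy) ∂(ν.prod ξ)
        = (∫ x, f (zz.1, x) * f' (zz.2, x) ∂ν) * ∫ y, g (zz.1, y) * g' (zz.2, y) ∂ξ := fun zz =>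
      integral_prod_mul (fun x => f (zz.1, x) * f' (zz.2, x)) (fun y => g (zz.1, y) * g' (zz.2, y))
    rw [step1, step2]
    exact integral_congr_ae (Filter.Eventually.of_forall fun zz => step3 zz)
  rw [hval]
  exact abs_integral_mul_le_sqrt_mul_sqrt (memL2_kernel hf hf') (memL2_kernel hg hg')

end main


/-- For `f, f' ∈ L²(ℝ^j × ℝ^p)` and `g, g' ∈ L²(ℝ^j × ℝ^q)`, with
`F(z,z') = ∫ f(z,x) f'(z',x) dx` and `G(z,z') = ∫ g(z,y) g'(z',y) dy`, the product of the
contractions `(f ⊗_j g)·(f' ⊗_j g')` is integrable over `ℝ^p × ℝ^q` and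
`|∫ (f ⊗_j g)(f' ⊗_j g')| ≤ ‖F‖_{L²} ‖G‖_{L²}`. -/
theorem contraction_inner_product_bound
    (j p q : ℕ) (hj : 0 < j) (hp : 0 < p) (hq : 0 < q)
    (f f' : (Fin j → ℝ) × (Fin p → ℝ) → ℝ) (g g' : (Fin j → ℝ) × (Fin q → ℝ) → ℝ)
    (hf : MemLp f 2 volume) (hf' : MemLp f' 2 volume)
    (hg : MemLp g 2 volume) (hg' : MemLp g' 2 volume)
    (F G : (Fin j → ℝ) × (Fin j → ℝ) → ℝ)
    (hF : F = fun zz => ∫ x : Fin p → ℝ, f (zz.1, x) * f' (zz.2, x))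
    (hG : G = fun zz => ∫ y : Fin q → ℝ, g (zz.1, y) * g' (zz.2, y)) :
    Integrable (fun xy : (Fin p → ℝ) × (Fin q → ℝ) =>
      (∫ z : Fin j → ℝ, f (z, xy.1) * g (z, xy.2)) *
        (∫ z : Fin j → ℝ, f' (z, xy.1) * g' (z, xy.2))) volume ∧
    |∫ xy : (Fin p → ℝ) × (Fin q → ℝ),
        (∫ z : Fin j → ℝ, f (z, xy.1) * g (z, xy.2)) *
          (∫ z : Fin j → ℝ, f' (z, xy.1) * g' (z, xy.2))| ≤
      Real.sqrt (∫ zz : (Fin j → ℝ) × (Fin j → ℝ), (F zz) ^ 2) *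
        Real.sqrt (∫ zz : (Fin j → ℝ) × (Fin j → ℝ), (G zz) ^ 2) := by
  subst hF hG
  have main := gen (μ := (volume : Measure (Fin j → ℝ))) (ν := (volume : Measure (Fin p → ℝ)))
    (ξ := (volume : Measure (Fin q → ℝ))) f f' g g' hf hf' hg hg'
  exact main
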